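/- arXiv:1612.02651 — 3 statements merged into one kernel-verified Lean document; each statement's English description precedes it below -/
import Mathlib

section
/- Let n ≥ 2, m ≥ 1, let λ = (λ_{t,i,j}) be any family of integers, and let G = G(n,m,λ) be the τ₂-presented group. Then for every g ∈ G there exist unique integers α_1,…,α_n, γ_1,…,γ_m such that g = a_1^{α_1}⋯a_n^{α_n}·c_1^{γ_1}⋯c_m^{γ_m} in G; that is, if g = a_1^{x_1}⋯a_n^{x_n}·c_1^{y_1}⋯c_m^{y_m} for integers x_i, y_t, then necessarily x_i = α_i and y_t = γ_t for all i, t. -/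
open scoped commutatorElement

/-- A monoid is torsion-free if no nontrivial element has finite order
(the definition `Monoid.IsTorsionFree` of the older Mathlib, since removed). -/
def Monoid.IsTorsionFree (G : Type*) [Monoid G] : Prop :=
  ∀ g : G, g ≠ 1 → ¬IsOfFinOrder g

noncomputable def grpRank (G : Type*) [Group G] : ℕ :=
  sInf {k : ℕ | ∃ S : Finset G, S.card = k ∧ Subgroup.closure (S : Set G) = ⊤}

def IsTau2 (G : Type*) [Group G] : Prop :=
  Group.FG G ∧ Monoid.IsTorsionFree G ∧ ∀ g h : G, ⁅g, h⁆ ∈ Subgroup.center G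

def prodPow {G : Type*} [Group G] {k : ℕ} (v : Fin k → G) (e : Fin k → ℤ) : G :=
  (List.ofFn fun i => v i ^ e i).prod

def tau2Rels (n m : ℕ) (lam : Fin m → Fin n → Fin n → ℤ) :
    Set (FreeGroup (Fin n ⊕ Fin m)) :=
  {r | (∃ i j : Fin n, i < j ∧
          r = ⁅(FreeGroup.of (Sum.inl i) : FreeGroup (Fin n ⊕ Fin m)),
              FreeGroup.of (Sum.inl j)⁆ *
              (prodPow (fun t : Fin m => FreeGroup.of (Sum.inr t)) (fun t => lam t i j))⁻¹) ∨
       (∃ (i : Fin n) (t : Fin m), r = ⁅(FreeGroup.of (Sum.inl i) : FreeGroup (Fin n ⊕ Fin m)),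
              FreeGroup.of (Sum.inr t)⁆) ∨
       (∃ t s : Fin m, r = ⁅(FreeGroup.of (Sum.inr t) : FreeGroup (Fin n ⊕ Fin m)),
              FreeGroup.of (Sum.inr s)⁆)}

def Tau2Group (n m : ℕ) (lam : Fin m → Fin n → Fin n → ℤ) : Type :=
  PresentedGroup (tau2Rels n m lam)

instance (n m : ℕ) (lam : Fin m → Fin n → Fin n → ℤ) : Group (Tau2Group n m lam) :=
  inferInstanceAs (Group (PresentedGroup (tau2Rels n m lam)))

def tau2a {n m : ℕ} {lam : Fin m → Fin n → Fin n → ℤ} (i : Fin n) : Tau2Group n m lam :=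
  PresentedGroup.of (Sum.inl i)

def tau2c {n m : ℕ} {lam : Fin m → Fin n → Fin n → ℤ} (t : Fin m) : Tau2Group n m lam :=
  PresentedGroup.of (Sum.inr t)

def IsCSmall {G : Type*} [Group G] (g : G) : Prop :=
  ∀ x : G, x ∈ Subgroup.centralizer {g} ↔
    ∃ (t : ℤ) (z : G), z ∈ Subgroup.center G ∧ x = g ^ t * z

def IsMalcevBasis {G : Type*} [Group G] {n m : ℕ} (a : Fin n → G) (c : Fin m → G) : Prop :=
  (∀ t, c t ∈ Subgroup.center G) ∧
  (commutator G ≤ Subgroup.closure (Set.range c)) ∧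
  (∀ g : G, ∃! p : (Fin n → ℤ) × (Fin m → ℤ), g = prodPow a p.1 * prodPow c p.2)

/-! ### Auxiliary lemmas about `prodPow` -/

section ProdPow
variable {G : Type*} [Group G] {H : Type*} [Group H]

lemma prodPow_succ {k : ℕ} (v : Fin (k+1) → G) (e : Fin (k+1) → ℤ) :
    prodPow v e = v 0 ^ e 0 * prodPow (fun i => v i.succ) (fun i => e i.succ) := by
  simp [prodPow, List.ofFn_succ]

lemma prodPow_zero {k : ℕ} (v : Fin k → G) : prodPow v 0 = 1 := by
  simp [prodPow]

lemma map_prodPow (φ : G →* H) {k : ℕ} (v : Fin k → G) (e : Fin k → ℤ) :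
    φ (prodPow v e) = prodPow (fun i => φ (v i)) e := by
  simp [prodPow, map_list_prod, List.map_ofFn, Function.comp_def]

lemma prodPow_mem (S : Subgroup G) {k : ℕ} {v : Fin k → G} (hv : ∀ i, v i ∈ S)
    (e : Fin k → ℤ) : prodPow v e ∈ S := by
  refine S.list_prod_mem ?_
  intro x hx
  obtain ⟨i, rfl⟩ := List.mem_ofFn.1 hx
  exact S.zpow_mem (hv i) _

lemma prodPow_add_central {k : ℕ} {v : Fin k → G} (hv : ∀ i, v i ∈ Subgroup.center G)
    (e e' : Fin k → ℤ) : prodPow v (e + e') = prodPow v e * prodPow v e' := by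
  induction k with
  | zero => simp [prodPow]
  | succ k ih =>
    rw [prodPow_succ, prodPow_succ v e, prodPow_succ v e']
    have h0 : ∀ g : G, g * v 0 = v 0 * g := fun g =>
      (Subgroup.mem_center_iff.1 (hv 0) g)
    have hcom : ∀ (z : ℤ) (g : G), g * v 0 ^ z = v 0 ^ z * g := fun z g =>
      (Commute.zpow_right (show Commute g (v 0) from h0 g) z).eq
    have he : (fun i : Fin k => (e + e') i.succ)
        = (fun i => e i.succ) + (fun i => e' i.succ) := rfl
    rw [he, ih (fun i => hv i.succ)]
    show v 0 ^ (e 0 + e' 0) * _ = _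
    rw [zpow_add]
    simp only [mul_assoc]
    congr 1
    rw [← mul_assoc, ← hcom, mul_assoc]

lemma prodPow_single {k : ℕ} (v : Fin k → G) (i : Fin k) (z : ℤ) :
    prodPow v (Pi.single i z) = v i ^ z := by
  induction k with
  | zero => exact absurd i.2 (by omega)
  | succ k ih =>
    rw [prodPow_succ]
    rcases Fin.eq_zero_or_eq_succ i with rfl | ⟨j, rfl⟩
    · have h1 : (fun i : Fin k => (Pi.single (0 : Fin (k+1)) z : Fin (k+1) → ℤ) i.succ)
          = (0 : Fin k → ℤ) := by
        funext i
        simp [Pi.single_apply, (Fin.succ_ne_zero i)]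
      rw [h1, prodPow_zero, Pi.single_eq_same, mul_one]
    · have h1 : (Pi.single (j.succ : Fin (k+1)) z : Fin (k+1) → ℤ) 0 = 0 := by
        simp [Pi.single_apply, (Fin.succ_ne_zero j).symm]
      have h2 : (fun i : Fin k => (Pi.single (j.succ : Fin (k+1)) z : Fin (k+1) → ℤ) i.succ)
          = (Pi.single j z : Fin k → ℤ) := by
        funext i
        simp [Pi.single_apply, Fin.succ_inj]
      rw [h1, h2, ih, zpow_zero, one_mul]

lemma prodPow_ofAdd {A : Type*} [AddCommGroup A] {k : ℕ} (w : Fin k → A) (e : Fin k → ℤ) :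
    prodPow (fun i => Multiplicative.ofAdd (w i)) e = Multiplicative.ofAdd (∑ i, e i • w i) := by
  induction k with
  | zero => simp [prodPow]
  | succ k ih =>
    rw [prodPow_succ, ih, Fin.sum_univ_succ]
    rfl

lemma sum_zsmul_single {k : ℕ} (e : Fin k → ℤ) :
    (∑ i, e i • (Pi.single i 1 : Fin k → ℤ)) = e := by
  have h : ∀ i : Fin k, e i • (Pi.single i 1 : Fin k → ℤ) = Pi.single i (e i) := by
    intro i
    rw [← Pi.single_smul, smul_eq_mul, mul_one]
  simp_rw [h]
  exact Finset.univ_sum_single e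

end ProdPow

/-! ### The model group -/

section Model
variable (n m : ℕ) (lam : Fin m → Fin n → Fin n → ℤ)

def fM (x x' : Fin n → ℤ) : Fin m → ℤ :=
  fun t => ∑ p, ∑ q, if p < q then lam t p q * x p * x' q else 0

lemma fM_add_left (x y x' : Fin n → ℤ) :
    fM n m lam (x + y) x' = fM n m lam x x' + fM n m lam y x' := by
  funext t
  show _ = (∑ p : Fin n, ∑ q : Fin n, (_ : ℤ)) + (∑ p : Fin n, ∑ q : Fin n, (_ : ℤ))
  rw [← Finset.sum_add_distrib]
  refine Finset.sum_congr rfl fun p _ => ?_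
  rw [← Finset.sum_add_distrib]
  refine Finset.sum_congr rfl fun q _ => ?_
  split
  · simp; ring
  · simp

lemma fM_add_right (x x' y' : Fin n → ℤ) :
    fM n m lam x (x' + y') = fM n m lam x x' + fM n m lam x y' := by
  funext t
  show _ = (∑ p : Fin n, ∑ q : Fin n, (_ : ℤ)) + (∑ p : Fin n, ∑ q : Fin n, (_ : ℤ))
  rw [← Finset.sum_add_distrib]
  refine Finset.sum_congr rfl fun p _ => ?_
  rw [← Finset.sum_add_distrib]
  refine Finset.sum_congr rfl fun q _ => ?_
  split
  · simp; ring
  · simp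

lemma fM_zero_left (x' : Fin n → ℤ) : fM n m lam 0 x' = 0 := by
  funext t; simp [fM]

lemma fM_zero_right (x : Fin n → ℤ) : fM n m lam x 0 = 0 := by
  funext t; simp [fM]

lemma fM_neg_left (x x' : Fin n → ℤ) : fM n m lam (-x) x' = -fM n m lam x x' := by
  have h := fM_add_left n m lam x (-x) x'
  simp only [add_neg_cancel, fM_zero_left] at h
  linear_combination -h

lemma fM_neg_right (x x' : Fin n → ℤ) : fM n m lam x (-x') = -fM n m lam x x' := by
  have h := fM_add_right n m lam x x' (-x')
  simp only [add_neg_cancel, fM_zero_right] at h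
  linear_combination -h

lemma fM_single (i j : Fin n) :
    fM n m lam (Pi.single i 1) (Pi.single j 1) = fun t => if i < j then lam t i j else 0 := by
  funext t
  show (∑ p, ∑ q, _) = _
  rw [Finset.sum_eq_single i]
  · rw [Finset.sum_eq_single j]
    · simp
    · intro q _ hq
      simp [Pi.single_apply, hq]
    · simp
  · intro p _ hp
    refine Finset.sum_eq_zero fun q _ => ?_
    simp [Pi.single_apply, hp]
  · simp

@[ext]
structure Model (n m : ℕ) (lam : Fin m → Fin n → Fin n → ℤ) where
  x : Fin n → ℤ
  y : Fin m → ℤ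

instance : Mul (Model n m lam) :=
  ⟨fun a b => ⟨a.x + b.x, a.y + b.y + fM n m lam a.x b.x⟩⟩

instance : One (Model n m lam) := ⟨⟨0, 0⟩⟩

instance : Inv (Model n m lam) :=
  ⟨fun a => ⟨-a.x, -a.y + fM n m lam a.x a.x⟩⟩

variable {n m lam}

@[simp] lemma Model.mul_def (a b : Model n m lam) :
    a * b = ⟨a.x + b.x, a.y + b.y + fM n m lam a.x b.x⟩ := rfl

@[simp] lemma Model.one_def : (1 : Model n m lam) = ⟨0, 0⟩ := rfl

@[simp] lemma Model.inv_def (a : Model n m lam) :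
    a⁻¹ = ⟨-a.x, -a.y + fM n m lam a.x a.x⟩ := rfl

variable (n m lam)

instance : Group (Model n m lam) where
  mul_assoc a b c := by
    ext1 <;> simp [fM_add_left, fM_add_right] <;> abel
  one_mul a := by ext1 <;> simp [fM_zero_left]
  mul_one a := by ext1 <;> simp [fM_zero_right]
  inv_mul_cancel a := by
    ext1 <;> simp [fM_neg_left] <;> abel

lemma Model.commutator_def (a b : Model n m lam) :
    ⁅a, b⁆ = ⟨0, fM n m lam a.x b.x - fM n m lam b.x a.x⟩ := by
  rw [commutatorElement_def]
  ext1
  · simp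
  · simp [fM_add_left, fM_add_right, fM_neg_left, fM_neg_right]
    abel

/-- embedding of the c-part -/
def iota2 : Multiplicative (Fin m → ℤ) →* Model n m lam where
  toFun y := ⟨0, y.toAdd⟩
  map_one' := rfl
  map_mul' y y' := by ext1 <;> simp [fM_zero_left]

/-- projection to the a-part exponents -/
def fstHom : Model n m lam →* Multiplicative (Fin n → ℤ) where
  toFun a := Multiplicative.ofAdd a.x
  map_one' := rfl
  map_mul' a b := by simp [← ofAdd_add]

end Model

/-! ### Relations in the τ₂ group -/

section Main
variable {n m : ℕ} {lam : Fin m → Fin n → Fin n → ℤ}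

lemma tau2_mk_rel_eq_one {r : FreeGroup (Fin n ⊕ Fin m)} (hr : r ∈ tau2Rels n m lam) :
    (PresentedGroup.mk (tau2Rels n m lam) r : Tau2Group n m lam) = 1 :=
  (QuotientGroup.eq_one_iff r).2 (Subgroup.subset_normalClosure hr)

lemma tau2_rel1 (i j : Fin n) (hij : i < j) :
    ⁅(tau2a i : Tau2Group n m lam), (tau2a j : Tau2Group n m lam)⁆
      = prodPow (tau2c : Fin m → Tau2Group n m lam) (fun t => lam t i j) := by
  have h := tau2_mk_rel_eq_one (lam := lam)
    (Or.inl ⟨i, j, hij, rfl⟩)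
  rw [map_mul, map_inv, map_commutatorElement, map_prodPow, mul_inv_eq_one] at h
  exact h

lemma tau2_rel2 (i : Fin n) (t : Fin m) :
    Commute (tau2a i : Tau2Group n m lam) (tau2c t) := by
  have h := tau2_mk_rel_eq_one (lam := lam)
    (Or.inr (Or.inl ⟨i, t, rfl⟩))
  rw [map_commutatorElement] at h
  exact commutatorElement_eq_one_iff_commute.1 h

lemma tau2_rel3 (t s : Fin m) :
    Commute (tau2c t : Tau2Group n m lam) (tau2c s) := by
  have h := tau2_mk_rel_eq_one (lam := lam)
    (Or.inr (Or.inr ⟨t, s, rfl⟩))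
  rw [map_commutatorElement] at h
  exact commutatorElement_eq_one_iff_commute.1 h

lemma tau2c_mem_center (t : Fin m) :
    (tau2c t : Tau2Group n m lam) ∈ Subgroup.center (Tau2Group n m lam) := by
  rw [Subgroup.mem_center_iff]
  intro g
  have hg : g ∈ Subgroup.centralizer {(tau2c t : Tau2Group n m lam)} := by
    refine PresentedGroup.generated_by _ _ (fun j => ?_) g
    refine Subgroup.mem_centralizer_iff.2 ?_
    rintro x rfl
    rcases j with i | s
    · exact (tau2_rel2 i t).symm.eq
    · exact (tau2_rel3 s t).symm.eq
  exact (Subgroup.mem_centralizer_iff.1 hg _ rfl).symm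

lemma tau2C_mem_center (y : Fin m → ℤ) :
    prodPow (tau2c : Fin m → Tau2Group n m lam) y ∈ Subgroup.center (Tau2Group n m lam) :=
  prodPow_mem _ tau2c_mem_center y

lemma tau2C_comm (y : Fin m → ℤ) (w : Tau2Group n m lam) :
    w * prodPow tau2c y = prodPow tau2c y * w :=
  Subgroup.mem_center_iff.1 (tau2C_mem_center y) w

lemma tau2C_add (y y' : Fin m → ℤ) :
    prodPow (tau2c : Fin m → Tau2Group n m lam) (y + y')
      = prodPow tau2c y * prodPow tau2c y' :=
  prodPow_add_central tau2c_mem_center y y'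

lemma tau2C_neg (y : Fin m → ℤ) :
    prodPow (tau2c : Fin m → Tau2Group n m lam) (-y) = (prodPow tau2c y)⁻¹ := by
  refine eq_inv_of_mul_eq_one_left ?_
  rw [← tau2C_add]
  simp [prodPow_zero]

/-- the quasi-commutation subgroup -/
def Qsub (g : Tau2Group n m lam) : Subgroup (Tau2Group n m lam) where
  carrier := {h | ∃ y : Fin m → ℤ, g * h = prodPow tau2c y * (h * g)}
  one_mem' := ⟨0, by rw [prodPow_zero]; group⟩
  mul_mem' := by
    rintro h₁ h₂ ⟨y₁, e₁⟩ ⟨y₂, e₂⟩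
    refine ⟨y₁ + y₂, ?_⟩
    rw [tau2C_add]
    calc g * (h₁ * h₂) = (g * h₁) * h₂ := by rw [mul_assoc]
      _ = prodPow tau2c y₁ * (h₁ * (g * h₂)) := by rw [e₁]; group
      _ = prodPow tau2c y₁ * (h₁ * (prodPow tau2c y₂ * (h₂ * g))) := by rw [e₂]
      _ = prodPow tau2c y₁ * (prodPow tau2c y₂ * (h₁ * (h₂ * g))) := by
          rw [← mul_assoc h₁, tau2C_comm, mul_assoc]
      _ = prodPow tau2c y₁ * prodPow tau2c y₂ * (h₁ * h₂ * g) := by group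
  inv_mem' := by
    rintro h ⟨y, e⟩
    refine ⟨-y, ?_⟩
    have e1 : h⁻¹ * g * h = prodPow tau2c y * g := by
      calc h⁻¹ * g * h = h⁻¹ * (g * h) := by rw [mul_assoc]
        _ = h⁻¹ * (prodPow tau2c y * (h * g)) := by rw [e]
        _ = prodPow tau2c y * (h⁻¹ * (h * g)) := by
            rw [← mul_assoc, tau2C_comm y h⁻¹, mul_assoc]
        _ = prodPow tau2c y * g := by group
    have e2 : h⁻¹ * g = prodPow tau2c y * (g * h⁻¹) := by
      have e3 := congrArg (· * h⁻¹) e1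
      simpa [mul_assoc] using e3
    rw [tau2C_neg, eq_comm, inv_mul_eq_iff_eq_mul, e2]

lemma Qswap {g h : Tau2Group n m lam} {y : Fin m → ℤ}
    (e : g * h = prodPow tau2c y * (h * g)) :
    h * g = prodPow tau2c (-y) * (g * h) := by
  rw [tau2C_neg, e]
  group

lemma Qrel1 (i j : Fin n) (hij : i < j) :
    (tau2a i : Tau2Group n m lam) * tau2a j
      = prodPow tau2c (fun t => lam t i j) * (tau2a j * tau2a i) := by
  rw [← tau2_rel1 i j hij, commutatorElement_def]
  group

lemma Qgen (s s' : Fin n ⊕ Fin m) :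
    (PresentedGroup.of s' : Tau2Group n m lam) ∈ Qsub (PresentedGroup.of s) := by
  rcases s with i | t <;> rcases s' with j | u
  · rcases lt_trichotomy i j with hij | rfl | hji
    · exact ⟨fun t => lam t i j, Qrel1 i j hij⟩
    · exact ⟨0, by rw [prodPow_zero, one_mul]⟩
    · exact ⟨-(fun t => lam t j i), Qswap (Qrel1 j i hji)⟩
  · exact ⟨0, by rw [prodPow_zero, one_mul]; exact (tau2_rel2 i u).eq⟩
  · exact ⟨0, by rw [prodPow_zero, one_mul]; exact ((tau2_rel2 j t).symm).eq⟩
  · exact ⟨0, by rw [prodPow_zero, one_mul]; exact (tau2_rel3 t u).eq⟩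

lemma Qall (g h : Tau2Group n m lam) :
    ∃ y : Fin m → ℤ, g * h = prodPow tau2c y * (h * g) := by
  have step1 : ∀ (s : Fin n ⊕ Fin m) (h' : Tau2Group n m lam),
      h' ∈ Qsub (PresentedGroup.of s : Tau2Group n m lam) := fun s h' =>
    PresentedGroup.generated_by _ _ (fun j => Qgen s j) h'
  have hg : g ∈ Qsub h := by
    refine PresentedGroup.generated_by _ _ (fun s => ?_) g
    obtain ⟨y, e⟩ := step1 s h
    exact ⟨-y, Qswap e⟩
  obtain ⟨y, e⟩ := hg
  exact ⟨-y, Qswap e⟩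

lemma Amul {k : ℕ} (v : Fin k → Tau2Group n m lam) (e e' : Fin k → ℤ) :
    ∃ y : Fin m → ℤ,
      prodPow v e * prodPow v e' = prodPow v (e + e') * prodPow tau2c y := by
  induction k with
  | zero =>
    refine ⟨0, ?_⟩
    simp [prodPow, prodPow_zero]
  | succ k ih =>
    obtain ⟨y₁, e₁⟩ := Qall (prodPow (fun i => v i.succ) (fun i => e i.succ)) (v 0 ^ e' 0)
    obtain ⟨y₂, e₂⟩ := ih (fun i => v i.succ) (fun i => e i.succ) (fun i => e' i.succ)
    refine ⟨y₁ + y₂, ?_⟩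
    rw [prodPow_succ, prodPow_succ v e', prodPow_succ v (e + e')]
    have he : (fun i : Fin k => (e + e') i.succ)
        = (fun i => e i.succ) + (fun i => e' i.succ) := rfl
    rw [he]
    simp only [Pi.add_apply]
    set W := prodPow (fun i => v i.succ) (fun i => e i.succ) with hW
    set W' := prodPow (fun i => v i.succ) (fun i => e' i.succ) with hW'
    set W2 := prodPow (fun i => v i.succ) ((fun i => e i.succ) + fun i => e' i.succ) with hW2
    set z₁ := prodPow (tau2c : Fin m → Tau2Group n m lam) y₁ with hz₁
    set z₂ := prodPow (tau2c : Fin m → Tau2Group n m lam) y₂ with hz₂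
    calc v 0 ^ e 0 * W * (v 0 ^ e' 0 * W')
        = v 0 ^ e 0 * (W * v 0 ^ e' 0) * W' := by group
      _ = v 0 ^ e 0 * (z₁ * (v 0 ^ e' 0 * W)) * W' := by rw [e₁]
      _ = z₁ * (v 0 ^ e 0 * v 0 ^ e' 0 * (W * W')) := by
          rw [← mul_assoc (v 0 ^ e 0) z₁, tau2C_comm y₁ (v 0 ^ e 0), ← hz₁]
          group
      _ = z₁ * (v 0 ^ (e 0 + e' 0) * (W2 * z₂)) := by rw [zpow_add, e₂]
      _ = v 0 ^ (e 0 + e' 0) * (W2 * z₂) * z₁ :=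
          (tau2C_comm y₁ (v 0 ^ (e 0 + e' 0) * (W2 * z₂))).symm
      _ = v 0 ^ (e 0 + e' 0) * W2 * (z₂ * z₁) := by group
      _ = v 0 ^ (e 0 + e' 0) * W2 * prodPow tau2c (y₁ + y₂) := by
          rw [tau2C_add]
          show _ = _ * (z₁ * z₂)
          rw [tau2C_comm y₁ z₂]

/-- the subgroup of elements admitting Malcev coordinates -/
def Msub : Subgroup (Tau2Group n m lam) where
  carrier := {g | ∃ x : Fin n → ℤ, ∃ y : Fin m → ℤ,
    g = prodPow tau2a x * prodPow tau2c y}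
  one_mem' := ⟨0, 0, by simp [prodPow_zero]⟩
  mul_mem' := by
    rintro g h ⟨x, y, rfl⟩ ⟨x', y', rfl⟩
    obtain ⟨y₃, e₃⟩ := Amul (tau2a : Fin n → Tau2Group n m lam) x x'
    refine ⟨x + x', y₃ + (y + y'), ?_⟩
    calc prodPow tau2a x * prodPow tau2c y * (prodPow tau2a x' * prodPow tau2c y')
        = prodPow tau2a x * (prodPow tau2a x' * prodPow tau2c y) * prodPow tau2c y' := by
          rw [tau2C_comm y (prodPow tau2a x')]; group
      _ = prodPow tau2a x * prodPow tau2a x' * (prodPow tau2c y * prodPow tau2c y') := by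
          group
      _ = prodPow tau2a (x + x') * prodPow tau2c y₃ * prodPow tau2c (y + y') := by
          rw [e₃, tau2C_add]
      _ = prodPow tau2a (x + x') * prodPow tau2c (y₃ + (y + y')) := by
          rw [tau2C_add y₃ (y + y'), ← mul_assoc]
  inv_mem' := by
    rintro g ⟨x, y, rfl⟩
    obtain ⟨y₃, e₃⟩ := Amul (tau2a : Fin n → Tau2Group n m lam) x (-x)
    have hx : x + (-x) = 0 := by abel
    rw [hx, prodPow_zero] at e₃
    have hAinv : (prodPow (tau2a : Fin n → Tau2Group n m lam) x)⁻¹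
        = prodPow tau2a (-x) * prodPow tau2c (-y₃) := by
      refine inv_eq_of_mul_eq_one_right ?_
      rw [← mul_assoc, e₃, one_mul, tau2C_neg, mul_inv_cancel]
    refine ⟨-x, -y₃ + -y, ?_⟩
    rw [mul_inv_rev, hAinv, ← tau2C_neg y,
      ← tau2C_comm (-y) (prodPow tau2a (-x) * prodPow tau2c (-y₃)),
      mul_assoc, ← tau2C_add]

lemma tau2_exists_coords (g : Tau2Group n m lam) :
    ∃ x : Fin n → ℤ, ∃ y : Fin m → ℤ,
      g = prodPow tau2a x * prodPow tau2c y := by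
  refine PresentedGroup.generated_by _ (Msub) (fun j => ?_) g
  rcases j with i | t
  · exact ⟨Pi.single i 1, 0, by
      rw [prodPow_single, prodPow_zero, zpow_one, mul_one]; rfl⟩
  · exact ⟨0, Pi.single t 1, by
      rw [prodPow_single, prodPow_zero, zpow_one, one_mul]; rfl⟩

/-! ### The homomorphism to the model group -/

def tau2gen : (Fin n ⊕ Fin m) → Model n m lam :=
  Sum.elim (fun i => ⟨Pi.single i 1, 0⟩) (fun t => ⟨0, Pi.single t 1⟩)

lemma tau2gen_rels : ∀ r ∈ tau2Rels n m lam,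
    FreeGroup.lift (tau2gen (lam := lam)) r = 1 := by
  rintro r (⟨i, j, hij, rfl⟩ | ⟨i, t, rfl⟩ | ⟨t, s, rfl⟩)
  · rw [map_mul, map_inv, map_commutatorElement, map_prodPow]
    simp only [FreeGroup.lift_apply_of, tau2gen, Sum.elim_inl, Sum.elim_inr]
    have h1 : ⁅(⟨Pi.single i 1, 0⟩ : Model n m lam), (⟨Pi.single j 1, 0⟩ : Model n m lam)⁆
        = ⟨0, fun t => lam t i j⟩ := by
      rw [Model.commutator_def]
      congr 1
      rw [fM_single, fM_single]
      funext t
      simp [hij, asymm hij]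
    have h2 : prodPow (fun t : Fin m => (⟨0, Pi.single t 1⟩ : Model n m lam))
          (fun t => lam t i j)
        = (⟨0, fun t => lam t i j⟩ : Model n m lam) := by
      have : (fun t : Fin m => (⟨0, Pi.single t 1⟩ : Model n m lam))
          = fun t => iota2 n m lam (Multiplicative.ofAdd (Pi.single t 1)) := rfl
      rw [this, ← map_prodPow, prodPow_ofAdd, sum_zsmul_single]
      rfl
    rw [h1, h2, mul_inv_cancel]
  · rw [map_commutatorElement]
    simp only [FreeGroup.lift_apply_of, tau2gen, Sum.elim_inl, Sum.elim_inr]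
    rw [Model.commutator_def]
    ext1 <;> simp [fM_zero_left, fM_zero_right]
  · rw [map_commutatorElement]
    simp only [FreeGroup.lift_apply_of, tau2gen, Sum.elim_inl, Sum.elim_inr]
    rw [Model.commutator_def]
    ext1 <;> simp [fM_zero_left, fM_zero_right]

def tau2phi : Tau2Group n m lam →* Model n m lam :=
  PresentedGroup.toGroup (tau2gen_rels (lam := lam))

lemma tau2phi_a (i : Fin n) :
    tau2phi (tau2a i : Tau2Group n m lam) = ⟨Pi.single i 1, 0⟩ :=
  PresentedGroup.toGroup.of _

lemma tau2phi_c (t : Fin m) :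
    tau2phi (tau2c t : Tau2Group n m lam) = ⟨0, Pi.single t 1⟩ :=
  PresentedGroup.toGroup.of _

lemma tau2phi_C (y : Fin m → ℤ) :
    tau2phi (prodPow (tau2c : Fin m → Tau2Group n m lam) y) = ⟨0, y⟩ := by
  rw [map_prodPow]
  simp only [tau2phi_c]
  have : (fun t : Fin m => (⟨0, Pi.single t 1⟩ : Model n m lam))
      = fun t => iota2 n m lam (Multiplicative.ofAdd (Pi.single t 1)) := rfl
  rw [this, ← map_prodPow, prodPow_ofAdd, sum_zsmul_single]
  rfl

lemma tau2phi_A_fst (x : Fin n → ℤ) :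
    ((fstHom n m lam) (tau2phi (prodPow (tau2a : Fin n → Tau2Group n m lam) x))).toAdd
      = x := by
  rw [map_prodPow, map_prodPow]
  simp only [tau2phi_a]
  have : (fun i : Fin n => (fstHom n m lam) (⟨Pi.single i 1, 0⟩ : Model n m lam))
      = fun i => Multiplicative.ofAdd (Pi.single i 1) := rfl
  rw [this, prodPow_ofAdd, sum_zsmul_single]
  rfl

lemma tau2_coords_unique {x x' : Fin n → ℤ} {y y' : Fin m → ℤ}
    (h : prodPow (tau2a : Fin n → Tau2Group n m lam) x * prodPow tau2c y
       = prodPow tau2a x' * prodPow tau2c y') : x = x' ∧ y = y' := by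
  have hx : x = x' := by
    have h1 := congrArg (fun g => ((fstHom n m lam) (tau2phi g)).toAdd) h
    simp only [map_mul] at h1
    rw [tau2phi_C, tau2phi_C] at h1
    have h0 : (fstHom n m lam) (⟨0, y⟩ : Model n m lam) = 1 := rfl
    have h0' : (fstHom n m lam) (⟨0, y'⟩ : Model n m lam) = 1 := rfl
    rw [h0, h0', mul_one, mul_one] at h1
    have := tau2phi_A_fst (lam := lam) x
    rw [← tau2phi_A_fst (lam := lam) x, ← tau2phi_A_fst (lam := lam) x']
    exact h1
  subst hx
  have hy : prodPow (tau2c : Fin m → Tau2Group n m lam) y = prodPow tau2c y' :=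
    mul_left_cancel h
  have h2 := congrArg tau2phi hy
  rw [tau2phi_C, tau2phi_C] at h2
  exact ⟨rfl, congrArg Model.y h2⟩

end Main

/-- In the τ₂-presented group `G(n,m,λ)` with n ≥ 2, m ≥ 1, every element
has unique Malcev coordinates: g = a₁^{α₁}⋯aₙ^{αₙ}·c₁^{γ₁}⋯cₘ^{γₘ} for unique integers
α_i, γ_t. -/
theorem stmt1 (n m : ℕ) (hn : 2 ≤ n) (hm : 1 ≤ m) (lam : Fin m → Fin n → Fin n → ℤ) :
    ∀ g : Tau2Group n m lam,
      ∃! p : (Fin n → ℤ) × (Fin m → ℤ),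
        g = prodPow (@tau2a n m lam) p.1 * prodPow (@tau2c n m lam) p.2 := by
  intro g
  obtain ⟨x, y, hxy⟩ := tau2_exists_coords g
  refine ⟨(x, y), hxy, ?_⟩
  rintro ⟨x', y'⟩ h'
  have := tau2_coords_unique (lam := lam) (h'.symm.trans hxy)
  simp only [Prod.mk.injEq]
  exact ⟨this.1, this.2⟩
end

section
/- Let G be a τ₂-group with Malcev basis (A;C) = (a_1,…,a_n; c_1,…,c_m), with Malcev coordinates α_i, γ_t and structure constants λ_{t,i,j}. Fix k ∈ {1,…,n} and suppose the matrix M_k has rank n−1 (equivalently, the only v ∈ ℤ^{n−1} with M_k·v = 0 is v = 0). Then for every x ∈ G, [a_k, x] = 1 if and only if x = a_k^{α_k(x)}·c_1^{γ_1(x)}⋯c_m^{γ_m(x)} (i.e., α_j(x) = 0 for all j ≠ k). If, in addition, λ_{t,k,j} ≠ 0 for some t and some j ≠ k, then Z(G) = ⟨C⟩ and a_k is c-small. -/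
open scoped commutatorElement
open scoped IsMulCommutative

section MyAux
variable {G : Type} [Group G]

lemma myProdZpow {A : Type} [CommGroup A] (a : A) {ι : Type} (f : ι → ℤ) (s : Finset ι) :
    ∏ i ∈ s, a ^ f i = a ^ ∑ i ∈ s, f i := by
  classical
  induction s using Finset.cons_induction with
  | empty => simp
  | cons j s hj ih =>
      rw [Finset.prod_cons, Finset.sum_cons, ih, zpow_add]

lemma myZpowProd {A : Type} [CommGroup A] {ι : Type} (f : ι → A) (e : ℤ) (s : Finset ι) :
    (∏ i ∈ s, f i) ^ e = ∏ i ∈ s, f i ^ e := by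
  classical
  induction s using Finset.cons_induction with
  | empty => simp
  | cons j s hj ih => rw [Finset.prod_cons, Finset.prod_cons, mul_zpow, ih]

lemma myCoeOfFnProd {N : ℕ} (f : Fin N → Subgroup.center G) :
    (List.ofFn fun i => (f i : G)).prod = (((∏ i, f i) : Subgroup.center G) : G) := by
  rw [← List.prod_ofFn (f := f)]
  rw [show ((((List.ofFn f).prod : Subgroup.center G)) : G) = (Subgroup.center G).subtype (List.ofFn f).prod from rfl,
    map_list_prod (Subgroup.center G).subtype, List.map_ofFn]
  rfl

lemma myCommMul (hc : ∀ g h : G, ⁅g, h⁆ ∈ Subgroup.center G) (g x y : G) :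
    ⁅g, x * y⁆ = ⁅g, x⁆ * ⁅g, y⁆ := by
  have hz := Subgroup.mem_center_iff.mp (hc g y)
  have key : ⁅g, x * y⁆ = ⁅g, x⁆ * (x * ⁅g, y⁆ * x⁻¹) := by
    simp only [commutatorElement_def]; group
  rw [key, hz x]
  simp only [commutatorElement_def]
  group

lemma myCommInv (hc : ∀ g h : G, ⁅g, h⁆ ∈ Subgroup.center G) (g x : G) :
    ⁅g, x⁻¹⁆ = ⁅g, x⁆⁻¹ := by
  have : ⁅g, x * x⁻¹⁆ = 1 := by simp
  rw [myCommMul hc] at this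
  exact eq_inv_of_mul_eq_one_right (by rw [← this])

lemma myCommZpow (hc : ∀ g h : G, ⁅g, h⁆ ∈ Subgroup.center G) (g x : G) (e : ℤ) :
    ⁅g, x ^ e⁆ = ⁅g, x⁆ ^ e := by
  have hnat : ∀ N : ℕ, ⁅g, x ^ N⁆ = ⁅g, x⁆ ^ N := by
    intro N
    induction N with
    | zero => simp
    | succ N ih => rw [pow_succ, myCommMul hc, ih, pow_succ]
  rcases e with N | N
  · simpa using hnat N
  · rw [zpow_negSucc, myCommInv hc, hnat, ← zpow_natCast, ← zpow_neg, zpow_negSucc,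
      ← zpow_natCast, ← zpow_neg]

lemma myCommListProd (hc : ∀ g h : G, ⁅g, h⁆ ∈ Subgroup.center G) (g : G) (l : List G) :
    ⁅g, l.prod⁆ = (l.map fun x => ⁅g, x⁆).prod := by
  induction l with
  | nil => simp
  | cons h t ih => rw [List.prod_cons, myCommMul hc, ih, List.map_cons, List.prod_cons]

lemma myOfFnProdSingle {M : Type} [Monoid M] :
    ∀ {N : ℕ} (f : Fin N → M) (k : Fin N), (∀ j, j ≠ k → f j = 1) → (List.ofFn f).prod = f k := by
  intro N
  induction N with
  | zero => exact fun f k => k.elim0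
  | succ N ih =>
      intro f k h
      rw [List.ofFn_succ, List.prod_cons]
      rcases Fin.eq_zero_or_eq_succ k with h0 | ⟨j, rfl⟩
      · subst h0
        have : (List.ofFn fun i : Fin N => f i.succ).prod = 1 := by
          apply List.prod_eq_one
          intro x hx
          obtain ⟨i, rfl⟩ := List.mem_ofFn.mp hx
          exact h _ (Fin.succ_ne_zero i)
      
        rw [this, mul_one]
      · rw [h 0 (Fin.succ_ne_zero j).symm, one_mul]
        exact ih _ j (fun i hi => h i.succ (fun hcc => hi (Fin.succ_injective _ hcc)))

end MyAux

/-- In a τ₂-group G with Malcev basis (a;c), Malcev coordinates α, γ and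
structure constants λ, fix k and suppose the matrix M_k has rank n−1, i.e. the only
integer vector v with v_k = 0 and ∑ⱼ λ_{t,k,j}·vⱼ = 0 for all t is v = 0. Then
[a_k, x] = 1 iff x = a_k^{α_k(x)}·c₁^{γ₁(x)}⋯cₘ^{γₘ(x)}; and if moreover λ_{t,k,j} ≠ 0
for some t and some j ≠ k, then Z(G) = ⟨C⟩ and a_k is c-small. -/
theorem stmt7 (G : Type) [Group G] (n m : ℕ) (a : Fin n → G) (c : Fin m → G)
    (hT : IsTau2 G) (hMB : IsMalcevBasis a c)
    (α : G → Fin n → ℤ) (γ : G → Fin m → ℤ)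
    (hcoord : ∀ g : G, g = prodPow a (α g) * prodPow c (γ g))
    (lam : Fin m → Fin n → Fin n → ℤ)
    (hlam : ∀ i j : Fin n, i < j → ⁅a i, a j⁆ = prodPow c (fun t => lam t i j))
    (hskew : ∀ (t : Fin m) (i j : Fin n), lam t j i = -lam t i j)
    (hdiag : ∀ (t : Fin m) (i : Fin n), lam t i i = 0)
    (k : Fin n)
    (hrank : ∀ v : Fin n → ℤ, v k = 0 → (∀ t : Fin m, ∑ j : Fin n, lam t k j * v j = 0) →
      v = 0) :
    (∀ x : G, ⁅a k, x⁆ = 1 ↔ x = a k ^ α x k * prodPow c (γ x)) ∧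
    ((∃ (t : Fin m) (j : Fin n), j ≠ k ∧ lam t k j ≠ 0) →
      Subgroup.center G = Subgroup.closure (Set.range c) ∧ IsCSmall (a k)) := by

  classical
  obtain ⟨-, -, hcen⟩ := hT
  obtain ⟨hc, -, huniq⟩ := hMB
  set c' : Fin m → Subgroup.center G := fun t => ⟨c t, hc t⟩ with hc'
  -- L1 : prodPow c as a product in the center
  have L1 : ∀ e : Fin m → ℤ, prodPow c e = (((∏ t, c' t ^ e t) : Subgroup.center G) : G) := by
    intro e
    unfold prodPow
    rw [show (fun t => c t ^ e t) = fun t => ((c' t ^ e t : Subgroup.center G) : G) by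
      funext t; rw [SubgroupClass.coe_zpow]]
    exact myCoeOfFnProd _
  have Lcent : ∀ e : Fin m → ℤ, prodPow c e ∈ Subgroup.center G := by
    intro e; rw [L1]; exact (∏ t, c' t ^ e t).2
  have LprodA0 : prodPow a (0 : Fin n → ℤ) = 1 := by
    unfold prodPow
    apply List.prod_eq_one
    intro x hx
    obtain ⟨i, rfl⟩ := List.mem_ofFn.mp hx
    simp
  -- uniqueness of coordinates
  have uniq : ∀ (v w : Fin n → ℤ) (v' w' : Fin m → ℤ), True → True →
      prodPow a v * prodPow c v' = prodPow a w * prodPow c w' → v = w ∧ v' = w' := by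
    intro v w v' w' _ _ h
    obtain ⟨p, hp, hup⟩ := huniq (prodPow a v * prodPow c v')
    have h1 := hup (v, v') rfl
    have h2 := hup (w, w') h
    have h3 := h1.trans h2.symm
    exact ⟨congrArg Prod.fst h3, congrArg Prod.snd h3⟩
  have LcInj : ∀ e : Fin m → ℤ, prodPow c e = 1 → e = 0 := by
    intro e he
    have : prodPow a 0 * prodPow c e = prodPow a 0 * prodPow c 0 := by
      rw [LprodA0, one_mul, one_mul, he, L1]
      simp
    exact ((uniq _ _ _ _ trivial trivial this).2)
  -- all commutators of basis elements
  have Lcomm_aa : ∀ i j : Fin n, ⁅a i, a j⁆ = prodPow c (fun t => lam t i j) := by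
    intro i j
    rcases lt_trichotomy i j with hij | hij | hij
    · exact hlam i j hij
    · subst hij
      rw [commutatorElement_self]
      rw [show (fun t => lam t i i) = (0 : Fin m → ℤ) by funext t; exact hdiag t i]
      rw [L1]; simp
    · have h1 : ⁅a i, a j⁆ = ⁅a j, a i⁆⁻¹ := (commutatorElement_inv _ _).symm
      rw [h1, hlam j i hij, L1, L1]
      rw [show ((((∏ t, c' t ^ lam t i j) : Subgroup.center G) : G)) =
        (Subgroup.center G).subtype (∏ t, c' t ^ lam t i j) from rfl]
      rw [show ((((∏ t, c' t ^ lam t j i) : Subgroup.center G) : G))⁻¹ =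
        (Subgroup.center G).subtype (∏ t, c' t ^ lam t j i)⁻¹ from rfl]
      congr 1
      rw [← Finset.prod_inv_distrib]
      refine Finset.prod_congr rfl fun t _ => ?_
      rw [← zpow_neg, ← hskew t j i]
  -- key commutator formula
  have Lkey : ∀ (i : Fin n) (x : G),
      ⁅a i, x⁆ = prodPow c (fun t => ∑ j, lam t i j * α x j) := by
    intro i x
    have hmid : ⁅a i, prodPow a (α x)⁆ =
        (List.ofFn fun j => ((∏ t, c' t ^ (lam t i j * α x j) : Subgroup.center G) : G)).prod := by
      unfold prodPow
      rw [myCommListProd hcen, List.map_ofFn]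
      refine congrArg List.prod (congrArg List.ofFn (funext fun j => ?_))
      show ⁅a i, a j ^ α x j⁆ = _
      rw [myCommZpow hcen, Lcomm_aa i j, L1, ← SubgroupClass.coe_zpow]
      congr 1
      rw [myZpowProd]
      exact Finset.prod_congr rfl fun t _ => (zpow_mul _ _ _).symm
    calc ⁅a i, x⁆ = ⁅a i, prodPow a (α x) * prodPow c (γ x)⁆ := by rw [← hcoord x]
      _ = ⁅a i, prodPow a (α x)⁆ * ⁅a i, prodPow c (γ x)⁆ := myCommMul hcen _ _ _
      _ = ⁅a i, prodPow a (α x)⁆ := by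
            rw [commutatorElement_eq_one_iff_commute.mpr
              (Subgroup.mem_center_iff.mp (Lcent (γ x)) (a i)), mul_one]
      _ = prodPow c (fun t => ∑ j, lam t i j * α x j) := by
            rw [hmid, myCoeOfFnProd, L1]
            congr 1
            rw [Finset.prod_comm]
            exact Finset.prod_congr rfl fun t _ => myProdZpow (c' t) _ _
  -- Part 1
  have part1 : ∀ x : G, ⁅a k, x⁆ = 1 ↔ x = a k ^ α x k * prodPow c (γ x) := by
    intro x
    constructor
    · intro hcomm
      have hsum : ∀ t : Fin m, ∑ j, lam t k j * α x j = 0 := by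
        have := LcInj _ (by rw [← Lkey k x]; exact hcomm)
        intro t; exact congrFun this t
      set v : Fin n → ℤ := fun j => if j = k then 0 else α x j with hvdef
      have hv0 : v = 0 := by
        refine hrank v (by simp [hvdef]) fun t => ?_
        rw [← hsum t]
        refine Finset.sum_congr rfl fun j _ => ?_
        by_cases hj : j = k
        · subst hj; simp [hvdef, hdiag t j]
        · simp [hvdef, hj]
      have hzero : ∀ j, j ≠ k → α x j = 0 := by
        intro j hj
        have := congrFun hv0 j
        simpa [hvdef, hj] using this
      have hpa : prodPow a (α x) = a k ^ α x k := by
        unfold prodPow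
        exact myOfFnProdSingle _ k fun j hj => by rw [hzero j hj, zpow_zero]
      rw [← hpa]
      exact hcoord x
    · intro hx
      rw [commutatorElement_eq_one_iff_commute, hx]
      exact Commute.mul_right (Commute.zpow_right rfl _)
        (Subgroup.mem_center_iff.mp (Lcent (γ x)) (a k))
  refine ⟨part1, ?_⟩
  rintro ⟨t0, j0, hj0, hlam0⟩
  -- center = closure of range c
  have hcsub : ∀ e : Fin m → ℤ, prodPow c e ∈ Subgroup.closure (Set.range c) := by
    intro e
    unfold prodPow
    refine Subgroup.list_prod_mem _ ?_
    intro x hx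
    obtain ⟨i, rfl⟩ := List.mem_ofFn.mp hx
    exact Subgroup.zpow_mem _ (Subgroup.subset_closure (Set.mem_range_self i)) _
  have hcenter : Subgroup.center G = Subgroup.closure (Set.range c) := by
    apply le_antisymm
    · intro z hz
      -- z commutes with a k, so α z j = 0 for j ≠ k
      have h1 : ⁅a k, z⁆ = 1 := commutatorElement_eq_one_iff_commute.mpr
        (Subgroup.mem_center_iff.mp hz (a k))
      -- also z commutes with a j0
      have h2 : ⁅a j0, z⁆ = 1 := commutatorElement_eq_one_iff_commute.mpr
        (Subgroup.mem_center_iff.mp hz (a j0))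
      -- coordinates of z vanish off k
      have hsum : ∀ t : Fin m, ∑ j, lam t k j * α z j = 0 := by
        have := LcInj _ (by rw [← Lkey k z]; exact h1)
        intro t; exact congrFun this t
      set v : Fin n → ℤ := fun j => if j = k then 0 else α z j with hvdef
      have hv0 : v = 0 := by
        refine hrank v (by simp [hvdef]) fun t => ?_
        rw [← hsum t]
        refine Finset.sum_congr rfl fun j _ => ?_
        by_cases hj : j = k
        · subst hj; simp [hvdef, hdiag t j]
        · simp [hvdef, hj]
      have hzero : ∀ j, j ≠ k → α z j = 0 := by
        intro j hj
        have := congrFun hv0 j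
        simpa [hvdef, hj] using this
      -- from h2 with j0 : lam t0 j0 k * α z k = 0 forces α z k = 0
      have hsum2 : ∑ j, lam t0 j0 j * α z j = 0 := by
        have := LcInj _ (by rw [← Lkey j0 z]; exact h2)
        exact congrFun this t0
      have hk0 : α z k = 0 := by
        have heq : ∑ j, lam t0 j0 j * α z j = lam t0 j0 k * α z k := by
          rw [Finset.sum_eq_single k]
          · intro j _ hj
            rcases eq_or_ne j j0 with rfl | hjj0
            · rw [hdiag t0 j, zero_mul]
            · rw [hzero j hj, mul_zero]
          · intro h; exact absurd (Finset.mem_univ k) h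
        rw [heq] at hsum2
        have hne : lam t0 j0 k ≠ 0 := by
          rw [hskew t0 k j0]
          exact neg_ne_zero.mpr hlam0
        exact (mul_eq_zero.mp hsum2).resolve_left hne
      have hall : α z = 0 := by
        funext j
        by_cases hj : j = k
        · subst hj; exact hk0
        · exact hzero j hj
      have : z = prodPow c (γ z) := by
        conv_lhs => rw [hcoord z]
        rw [hall, LprodA0, one_mul]
      rw [this]
      exact hcsub _
    · rw [← Subgroup.closure_eq (Subgroup.center G)]
      exact Subgroup.closure_mono (by rintro _ ⟨i, rfl⟩; exact hc i)
  refine ⟨hcenter, ?_⟩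
  -- c-smallness of a k
  intro x
  constructor
  · intro hx
    have hcomm : ⁅a k, x⁆ = 1 := by
      rw [commutatorElement_eq_one_iff_commute]
      exact Subgroup.mem_centralizer_iff.mp hx (a k) rfl
    refine ⟨α x k, prodPow c (γ x), Lcent _, (part1 x).mp hcomm⟩
  · rintro ⟨s, z, hz, rfl⟩
    rw [Subgroup.mem_centralizer_iff]
    rintro h rfl
    have h1 : Commute (a k) (a k ^ s * z) :=
      Commute.mul_right (Commute.zpow_right rfl _)
        (Subgroup.mem_center_iff.mp hz (a k))
    exact h1
end

section
/- Let G be a τ₂-group and let a, b ∈ G be c-small elements with c := [a,b] ≠ 1. Then for all x, y ∈ G with [x,a] = 1 and [y,b] = 1, there exist unique integers s, t such that [x,b] = c^s and [a,y] = c^t, and moreover [x,y] = c^{s·t}. -/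
open scoped commutatorElement

section helpers
variable {G : Type} [Group G]

lemma comm_mul_left (hcent : ∀ g h : G, ⁅g, h⁆ ∈ Subgroup.center G)
    (g h k : G) : ⁅g * h, k⁆ = ⁅g, k⁆ * ⁅h, k⁆ := by
  have key : ⁅g * h, k⁆ = g * ⁅h, k⁆ * g⁻¹ * ⁅g, k⁆ := by
    simp only [commutatorElement_def]; group
  rw [key, Subgroup.mem_center_iff.mp (hcent h k) g]
  rw [mul_assoc ⁅h,k⁆, mul_inv_cancel, mul_one]
  exact Subgroup.mem_center_iff.mp (hcent g k) ⁅h,k⁆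

lemma comm_mul_right (hcent : ∀ g h : G, ⁅g, h⁆ ∈ Subgroup.center G)
    (g h k : G) : ⁅g, h * k⁆ = ⁅g, h⁆ * ⁅g, k⁆ := by
  apply inv_injective
  rw [commutatorElement_inv, comm_mul_left hcent, mul_inv_rev,
    commutatorElement_inv, commutatorElement_inv]
  exact Subgroup.mem_center_iff.mp (hcent k g) ⁅h,g⁆

lemma comm_zpow_left (hcent : ∀ g h : G, ⁅g, h⁆ ∈ Subgroup.center G)
    (g k : G) (n : ℤ) : ⁅g ^ n, k⁆ = ⁅g, k⁆ ^ n := by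
  induction n using Int.induction_on with
  | zero => simp
  | succ i ih => rw [zpow_add, zpow_one, comm_mul_left hcent, ih, zpow_add, zpow_one]
  | pred i ih =>
      have := comm_mul_left hcent (g ^ (-i - 1 : ℤ)) g k
      rw [← zpow_add_one] at this
      simp only [sub_add_cancel] at this
      rw [ih] at this
      have h2 : ⁅g ^ (-i - 1 : ℤ), k⁆ = ⁅g, k⁆ ^ (-i : ℤ) * ⁅g, k⁆⁻¹ := by
        rw [eq_mul_inv_iff_mul_eq, ← this]
      rw [h2, ← zpow_sub_one]

lemma comm_zpow_right (hcent : ∀ g h : G, ⁅g, h⁆ ∈ Subgroup.center G)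
    (g k : G) (n : ℤ) : ⁅g, k ^ n⁆ = ⁅g, k⁆ ^ n := by
  apply inv_injective
  rw [commutatorElement_inv, comm_zpow_left hcent, ← zpow_neg, zpow_neg,
    ← inv_zpow, commutatorElement_inv]

lemma comm_central_right (g z : G) (hz : z ∈ Subgroup.center G) : ⁅g, z⁆ = 1 := by
  rw [commutatorElement_eq_one_iff_mul_comm, ← Subgroup.mem_center_iff.mp hz g]

lemma comm_central_left (g z : G) (hz : z ∈ Subgroup.center G) : ⁅z, g⁆ = 1 := by
  rw [commutatorElement_eq_one_iff_mul_comm, Subgroup.mem_center_iff.mp hz g]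

end helpers
section stmt9helpers
variable {G : Type} [Group G]

lemma zpow_inj_of_tf (htf : Monoid.IsTorsionFree G) {c : G} (hc : c ≠ 1)
    {s t : ℤ} (h : c ^ s = c ^ t) : s = t := by
  by_contra hne
  exact htf c hc (isOfFinOrder_iff_zpow_eq_one.mpr
    ⟨s - t, sub_ne_zero.mpr hne, by rw [zpow_sub, h, mul_inv_cancel]⟩)

end stmt9helpers
private theorem stmt9_aux (G : Type) [Group G]
    (hT : Group.FG G ∧ Monoid.IsTorsionFree G ∧ ∀ g h : G, ⁅g, h⁆ ∈ Subgroup.center G)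
    (a b : G)
    (ha : ∀ x : G, x ∈ Subgroup.centralizer {a} ↔
      ∃ (t : ℤ) (z : G), z ∈ Subgroup.center G ∧ x = a ^ t * z)
    (hb : ∀ x : G, x ∈ Subgroup.centralizer {b} ↔
      ∃ (t : ℤ) (z : G), z ∈ Subgroup.center G ∧ x = b ^ t * z)
    (hc : ⁅a, b⁆ ≠ 1) :
    ∀ x y : G, ⁅x, a⁆ = 1 → ⁅y, b⁆ = 1 →
      (∃! s : ℤ, ⁅x, b⁆ = ⁅a, b⁆ ^ s) ∧
      (∃! t : ℤ, ⁅a, y⁆ = ⁅a, b⁆ ^ t) ∧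
      (∀ s t : ℤ, ⁅x, b⁆ = ⁅a, b⁆ ^ s → ⁅a, y⁆ = ⁅a, b⁆ ^ t →
        ⁅x, y⁆ = ⁅a, b⁆ ^ (s * t)) := by
  obtain ⟨-, htf, hcent⟩ := hT
  intro x y hxa hyb
  obtain ⟨s0, z, hz, hxz⟩ := (ha x).mp (Subgroup.mem_centralizer_singleton_iff.mpr
    (commutatorElement_eq_one_iff_mul_comm.mp hxa))
  obtain ⟨t0, w, hw, hyw⟩ := (hb y).mp (Subgroup.mem_centralizer_singleton_iff.mpr
    (commutatorElement_eq_one_iff_mul_comm.mp hyb))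
  have hxb : ⁅x, b⁆ = ⁅a, b⁆ ^ s0 := by
    rw [hxz, comm_mul_left hcent, comm_zpow_left hcent, comm_central_left b z hz, mul_one]
  have hay : ⁅a, y⁆ = ⁅a, b⁆ ^ t0 := by
    rw [hyw, comm_mul_right hcent, comm_zpow_right hcent, comm_central_right a w hw, mul_one]
  have hxy : ⁅x, y⁆ = ⁅a, b⁆ ^ (s0 * t0) := by
    rw [hxz, hyw, comm_mul_left hcent, comm_central_left _ z hz, mul_one,
      comm_mul_right hcent, comm_central_right _ w hw, mul_one,
      comm_zpow_left hcent, comm_zpow_right hcent, ← zpow_mul, mul_comm t0 s0]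
  refine ⟨⟨s0, hxb, fun s hs => zpow_inj_of_tf htf hc (hs.symm.trans hxb)⟩,
    ⟨t0, hay, fun t ht => zpow_inj_of_tf htf hc (ht.symm.trans hay)⟩, ?_⟩
  intro s t hs ht
  rw [zpow_inj_of_tf htf hc (hs.symm.trans hxb), zpow_inj_of_tf htf hc (ht.symm.trans hay)]
  exact hxy

/-- If G is a τ₂-group and a, b are c-small with c := [a,b] ≠ 1, then for all
x, y ∈ G with [x,a] = 1 and [y,b] = 1 there are unique integers s, t with [x,b] = cˢ and
[a,y] = cᵗ, and moreover [x,y] = c^{s·t}. -/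
theorem stmt9 (G : Type) [Group G] (hT : IsTau2 G) (a b : G)
    (ha : IsCSmall a) (hb : IsCSmall b) (hc : ⁅a, b⁆ ≠ 1) :
    ∀ x y : G, ⁅x, a⁆ = 1 → ⁅y, b⁆ = 1 →
      (∃! s : ℤ, ⁅x, b⁆ = ⁅a, b⁆ ^ s) ∧
      (∃! t : ℤ, ⁅a, y⁆ = ⁅a, b⁆ ^ t) ∧
      (∀ s t : ℤ, ⁅x, b⁆ = ⁅a, b⁆ ^ s → ⁅a, y⁆ = ⁅a, b⁆ ^ t →
        ⁅x, y⁆ = ⁅a, b⁆ ^ (s * t)) := by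
  exact stmt9_aux G hT a b ha hb hc
end
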